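/- For every positive integer n, (n+1)/2^{v₂(n+1)} = ∑_{k > v₂(n+1)} ⌊(n+1)/2^k + 1/2⌋, where v₂ denotes the 2-adic valuation; in particular the odd part of n+1 equals the tail of the rounding sum ∑_{k≥1}⌊(n+1)/2^k + 1/2⌋ beyond k = v₂(n+1). -/

import Mathlib

private lemma floor_half_eq (y : ℚ) : ⌊y + 1 / 2⌋ = ⌊2 * y⌋ - ⌊y⌋ := by
  have h1 : y = (⌊y⌋ : ℚ) + Int.fract y := (Int.floor_add_fract y).symm
  set f := Int.fract y with hf
  have hf0 : 0 ≤ f := Int.fract_nonneg y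
  have hf1 : f < 1 := Int.fract_lt_one y
  have e1 : ⌊y + 1 / 2⌋ = ⌊y⌋ + ⌊f + 1 / 2⌋ := by
    conv_lhs => rw [h1]
    rw [add_assoc, Int.floor_intCast_add]
  have e2 : ⌊2 * y⌋ = 2 * ⌊y⌋ + ⌊2 * f⌋ := by
    have h2 : (2 : ℚ) * ((⌊y⌋ : ℚ) + f) = ((2 * ⌊y⌋ : ℤ) : ℚ) + 2 * f := by
      push_cast; ring
    conv_lhs => rw [h1]
    rw [h2, Int.floor_intCast_add]
  have e3 : ⌊f + 1 / 2⌋ = ⌊2 * f⌋ := by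
    rcases lt_or_ge f (1 / 2) with h | h
    · rw [Int.floor_eq_zero_iff.2 ⟨by linarith, by linarith⟩,
        Int.floor_eq_zero_iff.2 ⟨by linarith, by linarith⟩]
    · have : (⌊f + 1 / 2⌋ : ℤ) = 1 := by
        apply Int.floor_eq_iff.2 <;> constructor <;> push_cast <;> linarith
      rw [this]
      symm
      apply Int.floor_eq_iff.2 <;> constructor <;> push_cast <;> linarith
  rw [e1, e2, e3]; ring

private lemma sum_round_eq (m : ℕ) :
    ∑ᶠ i : ℕ, ⌊(m : ℚ) / 2 ^ (i + 1) + 1 / 2⌋ = m := by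
  have key : ∀ i : ℕ, ⌊(m : ℚ) / 2 ^ (i + 1) + 1 / 2⌋
      = ⌊(m : ℚ) / 2 ^ i⌋ - ⌊(m : ℚ) / 2 ^ (i + 1)⌋ := by
    intro i
    rw [floor_half_eq]
    congr 2
    rw [pow_succ]
    field_simp
  have hzero : ∀ i : ℕ, m ≤ i → ⌊(m : ℚ) / 2 ^ (i + 1) + 1 / 2⌋ = 0 := by
    intro i hi
    have hm : (m : ℚ) < 2 ^ i := by
      exact_mod_cast lt_of_lt_of_le (Nat.lt_two_pow_self (n := m)) (by
        exact_mod_cast pow_le_pow_right₀ (by norm_num) hi)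
    have hpos : (0 : ℚ) < 2 ^ (i + 1) := by positivity
    apply Int.floor_eq_zero_iff.2
    constructor
    · have : (0 : ℚ) ≤ (m : ℚ) / 2 ^ (i + 1) := by positivity
      simpa using by linarith
    · have : (m : ℚ) / 2 ^ (i + 1) < 1 / 2 := by
        rw [div_lt_div_iff₀ hpos (by norm_num)]
        rw [pow_succ]
        nlinarith [hm]
      simpa using by linarith
  rw [finsum_eq_sum_of_support_subset _ (s := Finset.range m) (by
    intro i hi
    simp only [Function.mem_support, Finset.coe_range, Set.mem_Iio] at hi ⊢
    by_contra h
    exact hi (hzero i (le_of_not_gt h)))]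
  have := Finset.sum_range_sub' (fun i => ⌊(m : ℚ) / 2 ^ i⌋) m
  calc ∑ i ∈ Finset.range m, ⌊(m : ℚ) / 2 ^ (i + 1) + 1 / 2⌋
      = ∑ i ∈ Finset.range m, (⌊(m : ℚ) / 2 ^ i⌋ - ⌊(m : ℚ) / 2 ^ (i + 1)⌋) :=
        Finset.sum_congr rfl fun i _ => key i
    _ = ⌊(m : ℚ) / 2 ^ 0⌋ - ⌊(m : ℚ) / 2 ^ m⌋ := this
    _ = m := by
        have h0 : ⌊(m : ℚ) / 2 ^ 0⌋ = m := by simp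
        have hm : (m : ℚ) < 2 ^ m := by exact_mod_cast Nat.lt_two_pow_self (n := m)
        have h1 : ⌊(m : ℚ) / 2 ^ m⌋ = 0 := by
          apply Int.floor_eq_zero_iff.2
          constructor
          · have : (0 : ℚ) ≤ (m : ℚ) / 2 ^ m := by positivity
            simpa using this
          · have : (m : ℚ) / 2 ^ m < 1 := by
              rw [div_lt_one (by positivity)]; exact hm
            simpa using this
        rw [h0, h1, sub_zero]

theorem oddPart_eq_round_tail (n : ℕ) (hn : 0 < n) :
    (((n + 1) / 2 ^ ((n + 1).factorization 2) : ℕ) : ℤ) =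
      ∑ᶠ i : ℕ, ⌊((n : ℚ) + 1) / 2 ^ ((n + 1).factorization 2 + i + 1) + 1 / 2⌋ := by
  set v := (n + 1).factorization 2 with hv
  set m := (n + 1) / 2 ^ v with hm
  have hdvd : 2 ^ v ∣ (n + 1) := Nat.ordProj_dvd (n + 1) 2
  have hN : (n + 1) = 2 ^ v * m := (Nat.mul_div_cancel' hdvd).symm
  have hQ : ((n : ℚ) + 1) = 2 ^ v * m := by
    exact_mod_cast hN
  have harg : ∀ i : ℕ, ((n : ℚ) + 1) / 2 ^ (v + i + 1) = (m : ℚ) / 2 ^ (i + 1) := by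
    intro i
    rw [hQ]
    rw [show v + i + 1 = v + (i + 1) by ring, pow_add]
    have h2 : (2 : ℚ) ^ v ≠ 0 := by positivity
    field_simp
  calc ((m : ℕ) : ℤ) = ∑ᶠ i : ℕ, ⌊(m : ℚ) / 2 ^ (i + 1) + 1 / 2⌋ := (sum_round_eq m).symm
    _ = ∑ᶠ i : ℕ, ⌊((n : ℚ) + 1) / 2 ^ (v + i + 1) + 1 / 2⌋ := by
        apply finsum_congr
        intro i
        rw [harg i]
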